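/- arXiv:math/0407138 — 5 statements merged into one kernel-verified Lean document; each statement's English description precedes it below -/
import Mathlib

section
/- The integral of ξ(t) = (cos²t + 2t·sin t·cos t + t² − π²/4)/cos²t over [0, π/2] equals −π/2, where ξ is extended continuously to t = π/2 by ξ(π/2) = 0. -/
open Real Set Filter Topology

noncomputable def xi (t : ℝ) : ℝ :=
  (Real.cos t ^ 2 + 2 * t * Real.sin t * Real.cos t + t ^ 2 - Real.pi ^ 2 / 4) / Real.cos t ^ 2

noncomputable def Nf (t : ℝ) : ℝ :=
  Real.cos t ^ 2 + 2 * t * Real.sin t * Real.cos t + t ^ 2 - Real.pi ^ 2 / 4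

lemma hNderiv (t : ℝ) : HasDerivAt Nf (4 * t * Real.cos t ^ 2) t := by
  have h1 : HasDerivAt (fun t : ℝ => Real.cos t ^ 2) (2 * Real.cos t ^ 1 * (-Real.sin t)) t :=
    (Real.hasDerivAt_cos t).pow 2
  have h2 : HasDerivAt (fun t : ℝ => 2 * t * Real.sin t * Real.cos t)
      (((2 * 1) * Real.sin t + (2 * t) * Real.cos t) * Real.cos t
        + (2 * t * Real.sin t) * (-Real.sin t)) t :=
    (((hasDerivAt_id t).const_mul 2).mul (Real.hasDerivAt_sin t)).mul (Real.hasDerivAt_cos t)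
  have h3 : HasDerivAt (fun t : ℝ => t ^ 2 - Real.pi ^ 2 / 4) (2 * t) t := by
    simpa using (hasDerivAt_pow 2 t).sub_const (Real.pi ^ 2 / 4)
  have H := (h1.add h2).add h3
  have hNf : Nf = fun x => Real.cos x ^ 2 + 2 * x * Real.sin x * Real.cos x
      + (x ^ 2 - Real.pi ^ 2 / 4) := by
    funext x; unfold Nf; ring
  rw [hNf]
  refine H.congr_deriv ?_
  linear_combination (-(2:ℝ) * t) * Real.sin_sq_add_cos_sq t

lemma Nf_cont : Continuous Nf := by unfold Nf; continuity

lemma Nf_pi_div_two : Nf (Real.pi / 2) = 0 := by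
  simp [Nf, Real.cos_pi_div_two]; ring

lemma xi_tendsto : Tendsto xi (𝓝[<] (Real.pi/2)) (𝓝 0) := by
  have hmem : Ioo 0 (Real.pi/2) ∈ 𝓝[<] (Real.pi/2) :=
    Ioo_mem_nhdsLT_of_mem ⟨by positivity, le_refl _⟩
  have hDderiv : ∀ t : ℝ, HasDerivAt (fun t => Real.cos t ^ 2)
      (-(2 * Real.sin t * Real.cos t)) t := by
    intro t
    have := (Real.hasDerivAt_cos t).pow 2
    refine this.congr_deriv ?_; norm_num; ring
  have hkey : Tendsto (fun t => Nf t / Real.cos t ^ 2) (𝓝[<] (Real.pi/2)) (𝓝 0) := by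
    apply HasDerivAt.lhopital_zero_nhdsLT (f' := fun t => 4 * t * Real.cos t ^ 2)
      (g' := fun t => -(2 * Real.sin t * Real.cos t))
    · exact Eventually.of_forall hNderiv
    · exact Eventually.of_forall hDderiv
    · filter_upwards [hmem] with t ht
      have hs : 0 < Real.sin t :=
        Real.sin_pos_of_pos_of_lt_pi ht.1 (by linarith [Real.pi_pos, ht.2])
      have hc : 0 < Real.cos t :=
        Real.cos_pos_of_mem_Ioo ⟨by linarith [Real.pi_pos, ht.1], ht.2⟩
      nlinarith
    · have := (Nf_cont.tendsto (Real.pi/2)).mono_left (nhdsWithin_le_nhds (s := Iio (Real.pi/2)))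
      rwa [Nf_pi_div_two] at this
    · have hc2 : Continuous (fun t => Real.cos t ^ 2) := by continuity
      have := (hc2.tendsto (Real.pi/2)).mono_left (nhdsWithin_le_nhds (s := Iio (Real.pi/2)))
      simpa [Real.cos_pi_div_two] using this
    · have htarget : Tendsto (fun t => -(2 * t * Real.cos t) / Real.sin t)
          (𝓝[<] (Real.pi/2)) (𝓝 0) := by
        have h1 : ContinuousAt (fun t => -(2 * t * Real.cos t) / Real.sin t) (Real.pi/2) := by
          apply ContinuousAt.div
          · fun_prop
          · fun_prop
          · simp [Real.sin_pi_div_two]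
        have := h1.tendsto.mono_left (nhdsWithin_le_nhds (s := Iio (Real.pi/2)))
        simpa [Real.cos_pi_div_two] using this
      apply htarget.congr'
      filter_upwards [hmem] with t ht
      have hs : 0 < Real.sin t :=
        Real.sin_pos_of_pos_of_lt_pi ht.1 (by linarith [Real.pi_pos, ht.2])
      have hc : 0 < Real.cos t :=
        Real.cos_pos_of_mem_Ioo ⟨by linarith [Real.pi_pos, ht.1], ht.2⟩
      field_simp
      ring
  exact hkey

lemma xi_eq (t : ℝ) : xi t = Nf t / Real.cos t ^ 2 := rfl

lemma xi_pi_div_two : xi (Real.pi / 2) = 0 := by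
  rw [xi_eq, Nf_pi_div_two, zero_div]

lemma xi_contOn : ContinuousOn xi (Icc 0 (Real.pi/2)) := by
  intro x hx
  rcases lt_or_eq_of_le hx.2 with hlt | heq
  · have hc : Real.cos x ≠ 0 := by
      have : 0 < Real.cos x :=
        Real.cos_pos_of_mem_Ioo ⟨by linarith [Real.pi_pos, hx.1], hlt⟩
      linarith
    have : ContinuousAt xi x := by
      apply ContinuousAt.div
      · fun_prop
      · fun_prop
      · positivity
    exact this.continuousWithinAt
  · subst heq
    -- continuity within at π/2
    unfold ContinuousWithinAt
    rw [xi_pi_div_two]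
    have hsub : Icc (0:ℝ) (Real.pi/2) ⊆ Iio (Real.pi/2) ∪ {Real.pi/2} := by
      intro y hy
      rcases lt_or_eq_of_le hy.2 with h | h
      · exact Or.inl h
      · exact Or.inr (by simp [h])
    apply Tendsto.mono_left _ (nhdsWithin_mono _ hsub)
    rw [nhdsWithin_union]
    rw [tendsto_sup]
    constructor
    · exact xi_tendsto
    · rw [nhdsWithin_singleton]
      have : Tendsto xi (pure (Real.pi/2)) (𝓝 (xi (Real.pi/2))) := tendsto_pure_nhds xi _
      rwa [xi_pi_div_two] at this

noncomputable def gA (t : ℝ) : ℝ := t + (t ^ 2 - Real.pi ^ 2 / 4) * Real.tan t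

noncomputable def GA (t : ℝ) : ℝ := if t = Real.pi / 2 then -(Real.pi / 2) else gA t

lemma gA_eq (t : ℝ) :
    gA t = t + ((t + Real.pi / 2) * Real.sin t) * ((t - Real.pi / 2) / Real.cos t) := by
  unfold gA
  rw [Real.tan_eq_sin_div_cos, ← mul_div_assoc, ← mul_div_assoc]
  congr 2
  ring

lemma gA_hasDeriv {x : ℝ} (hx : x ∈ Ioo (0:ℝ) (Real.pi/2)) : HasDerivAt gA (xi x) x := by
  have hc : 0 < Real.cos x :=
    Real.cos_pos_of_mem_Ioo ⟨by linarith [Real.pi_pos, hx.1], hx.2⟩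
  have htan : HasDerivAt Real.tan (1 / Real.cos x ^ 2) x := Real.hasDerivAt_tan (ne_of_gt hc)
  have h1 : HasDerivAt (fun t : ℝ => t ^ 2 - Real.pi ^ 2 / 4) (2 * x) x := by
    simpa using (hasDerivAt_pow 2 x).sub_const (Real.pi ^ 2 / 4)
  have h2 := (hasDerivAt_id x).add (h1.mul htan)
  have heq : xi x = 1 + (2 * x * Real.tan x + (x ^ 2 - Real.pi ^ 2 / 4) * (1 / Real.cos x ^ 2)) := by
    rw [xi_eq, Nf, Real.tan_eq_sin_div_cos]
    field_simp
    ring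
  rw [heq]
  exact h2

lemma slope_tendsto :
    Tendsto (fun t => (t - Real.pi / 2) / Real.cos t) (𝓝[<] (Real.pi/2)) (𝓝 (-1)) := by
  have hd : HasDerivAt Real.cos (-1) (Real.pi / 2) := by
    simpa using Real.hasDerivAt_cos (Real.pi / 2)
  rw [hasDerivAt_iff_tendsto_slope] at hd
  have hinv := hd.inv₀ (by norm_num)
  have : Tendsto (fun t => (t - Real.pi / 2) / Real.cos t) (𝓝[≠] (Real.pi/2)) (𝓝 (-1)) := by
    have : (-1 : ℝ) = (-1 : ℝ)⁻¹ := by norm_num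
    rw [this]
    apply hinv.congr
    intro t
    rw [slope_def_field, Real.cos_pi_div_two, sub_zero, inv_div]
  exact this.mono_left (nhdsWithin_mono _ (fun y hy => ne_of_lt hy))

lemma GA_tendsto : Tendsto GA (𝓝[<] (Real.pi/2)) (𝓝 (-(Real.pi/2))) := by
  have hmain : Tendsto (fun t => t + ((t + Real.pi / 2) * Real.sin t) * ((t - Real.pi / 2) / Real.cos t))
      (𝓝[<] (Real.pi/2)) (𝓝 (-(Real.pi/2))) := by
    have h1 : Tendsto (fun t : ℝ => t) (𝓝[<] (Real.pi/2)) (𝓝 (Real.pi/2)) :=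
      tendsto_id.mono_left nhdsWithin_le_nhds
    have h2 : Tendsto (fun t : ℝ => (t + Real.pi / 2) * Real.sin t) (𝓝[<] (Real.pi/2))
        (𝓝 (Real.pi * 1)) := by
      have : ContinuousAt (fun t : ℝ => (t + Real.pi / 2) * Real.sin t) (Real.pi/2) := by fun_prop
      have := this.tendsto.mono_left (nhdsWithin_le_nhds (s := Iio (Real.pi/2)))
      simpa [Real.sin_pi_div_two] using this
    have := h1.add (h2.mul slope_tendsto)
    convert this using 2
    ring
  have hGg : ∀ᶠ t in 𝓝[<] (Real.pi/2), (fun t => t + ((t + Real.pi / 2) * Real.sin t) * ((t - Real.pi / 2) / Real.cos t)) t = GA t := by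
    filter_upwards [self_mem_nhdsWithin] with t ht
    rw [GA, if_neg (ne_of_lt ht), gA_eq]
  exact hmain.congr' hGg

lemma GA_contOn : ContinuousOn GA (Icc 0 (Real.pi/2)) := by
  intro x hx
  rcases lt_or_eq_of_le hx.2 with hlt | heq
  · have hc : 0 < Real.cos x :=
      Real.cos_pos_of_mem_Ioo ⟨by linarith [Real.pi_pos, hx.1], hlt⟩
    have hg : ContinuousAt gA x := by
      apply ContinuousAt.add continuousAt_id
      exact ContinuousAt.mul (by fun_prop) (Real.continuousAt_tan.2 (ne_of_gt hc))
    have hGg : GA =ᶠ[𝓝 x] gA := by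
      filter_upwards [Iio_mem_nhds hlt] with t ht
      rw [GA, if_neg (ne_of_lt ht)]
    exact (hg.congr hGg.symm).continuousWithinAt
  · subst heq
    unfold ContinuousWithinAt
    have hGval : GA (Real.pi/2) = -(Real.pi/2) := by rw [GA, if_pos rfl]
    rw [hGval]
    have hsub : Icc (0:ℝ) (Real.pi/2) ⊆ Iio (Real.pi/2) ∪ {Real.pi/2} := by
      intro y hy
      rcases lt_or_eq_of_le hy.2 with h | h
      · exact Or.inl h
      · exact Or.inr (by simp [h])
    apply Tendsto.mono_left _ (nhdsWithin_mono _ hsub)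
    rw [nhdsWithin_union, tendsto_sup]
    refine ⟨GA_tendsto, ?_⟩
    rw [nhdsWithin_singleton]
    have : Tendsto GA (pure (Real.pi/2)) (𝓝 (GA (Real.pi/2))) := tendsto_pure_nhds GA _
    rwa [hGval] at this

theorem xi_integral : ∫ t in (0:ℝ)..(Real.pi / 2), xi t = -(Real.pi / 2) := by
  have hab : (0:ℝ) ≤ Real.pi / 2 := by positivity
  have hint : IntervalIntegrable xi MeasureTheory.volume 0 (Real.pi/2) := by
    apply ContinuousOn.intervalIntegrable
    rw [uIcc_of_le hab]; exact xi_contOn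
  have hderiv : ∀ x ∈ Ioo (0:ℝ) (Real.pi/2), HasDerivWithinAt GA (xi x) (Ioi x) x := by
    intro x hx
    have hg := gA_hasDeriv hx
    have hGg : GA =ᶠ[𝓝 x] gA := by
      filter_upwards [Iio_mem_nhds hx.2] with t ht
      rw [GA, if_neg (ne_of_lt ht)]
    exact (hg.congr_of_eventuallyEq hGg).hasDerivWithinAt
  have key := intervalIntegral.integral_eq_sub_of_hasDeriv_right_of_le hab GA_contOn hderiv hint
  rw [key]
  have h1 : GA (Real.pi/2) = -(Real.pi/2) := by rw [GA, if_pos rfl]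
  have h2 : GA 0 = 0 := by
    rw [GA, if_neg (by positivity), gA]
    simp [Real.tan_zero]
  rw [h1, h2, sub_zero]
end

section
/- The function ξ(t) = (cos²t + 2t·sin t·cos t + t² − π²/4)/cos²t satisfies 1 − π²/4 ≤ ξ(t) ≤ 0 for all t in (−π/2, π/2), with the minimum ξ(0) = 1 − π²/4 attained at t = 0. -/
open Real Set

lemma hasDerivAt_h (u : ℝ) :
    HasDerivAt (fun u => (Real.cos u + u * Real.sin u) ^ 2 + (u * Real.cos u) ^ 2)
      (4 * u * Real.cos u ^ 2) u := by
  have h1 : HasDerivAt (fun u : ℝ => Real.cos u + u * Real.sin u)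
      (-Real.sin u + (1 * Real.sin u + u * Real.cos u)) u :=
    (Real.hasDerivAt_cos u).add ((hasDerivAt_id u).mul (Real.hasDerivAt_sin u))
  have h2 : HasDerivAt (fun u : ℝ => u * Real.cos u)
      (1 * Real.cos u + u * -Real.sin u) u :=
    (hasDerivAt_id u).mul (Real.hasDerivAt_cos u)
  have := (h1.pow 2).add (h2.pow 2)
  refine this.congr_deriv ?_
  norm_num
  ring

lemma h_le (t : ℝ) (ht : t ∈ Icc 0 (Real.pi / 2)) :
    (Real.cos t + t * Real.sin t) ^ 2 + (t * Real.cos t) ^ 2 ≤ Real.pi ^ 2 / 4 := by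
  have hmono : MonotoneOn
      (fun u => (Real.cos u + u * Real.sin u) ^ 2 + (u * Real.cos u) ^ 2)
      (Icc 0 (Real.pi / 2)) := by
    apply monotoneOn_of_deriv_nonneg (convex_Icc _ _)
    · exact Continuous.continuousOn (by continuity)
    · intro x hx
      exact (hasDerivAt_h x).differentiableAt.differentiableWithinAt
    · intro x hx
      rw [interior_Icc] at hx
      rw [(hasDerivAt_h x).deriv]
      have := hx.1
      positivity
  have hpi : Real.pi / 2 ∈ Icc 0 (Real.pi / 2) := ⟨by positivity, le_refl _⟩
  have hval : (Real.cos (Real.pi / 2) + (Real.pi / 2) * Real.sin (Real.pi / 2)) ^ 2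
      + ((Real.pi / 2) * Real.cos (Real.pi / 2)) ^ 2 = Real.pi ^ 2 / 4 := by
    rw [Real.cos_pi_div_two, Real.sin_pi_div_two]; ring
  exact le_trans (hmono ht hpi ht.2) hval.le

lemma psi_deriv (u : ℝ) (hu : Real.sin u ≠ 0) :
    HasDerivAt (fun u => (2 * u * Real.sin u * Real.cos u + u ^ 2) / Real.sin u ^ 2)
      ((((2 * Real.sin u + 2 * u * Real.cos u) * Real.cos u
          + 2 * u * Real.sin u * (-Real.sin u) + 2 * u) * Real.sin u ^ 2
        - (2 * u * Real.sin u * Real.cos u + u ^ 2) * (2 * Real.sin u * Real.cos u))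
        / (Real.sin u ^ 2) ^ 2) u := by
  have l1 : HasDerivAt (fun u : ℝ => 2 * u) 2 u := by
    simpa using (hasDerivAt_id u).const_mul (2 : ℝ)
  have l2 := (l1.mul (Real.hasDerivAt_sin u)).mul (Real.hasDerivAt_cos u)
  have hA := l2.add (hasDerivAt_pow 2 u)
  have hB : HasDerivAt (fun u : ℝ => Real.sin u ^ 2)
      (2 * Real.sin u ^ 1 * Real.cos u) u := (Real.hasDerivAt_sin u).pow 2
  have := hA.div hB (by positivity)
  refine this.congr_deriv ?_
  simp only [Pi.mul_apply, Pi.add_apply]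
  push_cast
  ring

lemma psi_ge (t : ℝ) (ht : t ∈ Ioo 0 (Real.pi / 2)) :
    Real.pi ^ 2 / 4 * Real.sin t ^ 2 ≤ 2 * t * Real.sin t * Real.cos t + t ^ 2 := by
  have hst : 0 < Real.sin t :=
    Real.sin_pos_of_pos_of_lt_pi ht.1 (by linarith [Real.pi_pos, ht.2])
  have hsin : ∀ u ∈ Icc t (Real.pi / 2), 0 < Real.sin u := by
    intro u hu
    apply Real.sin_pos_of_pos_of_lt_pi (lt_of_lt_of_le ht.1 hu.1)
    linarith [Real.pi_pos, hu.2]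
  have hanti : AntitoneOn
      (fun u => (2 * u * Real.sin u * Real.cos u + u ^ 2) / Real.sin u ^ 2)
      (Icc t (Real.pi / 2)) := by
    apply antitoneOn_of_deriv_nonpos (convex_Icc _ _)
    · apply ContinuousOn.div (by fun_prop) (by fun_prop)
      intro u hu
      exact pow_ne_zero 2 (ne_of_gt (hsin u hu))
    · intro x hx
      rw [interior_Icc] at hx
      have hs : Real.sin x ≠ 0 := ne_of_gt (hsin x ⟨hx.1.le, hx.2.le⟩)
      exact (psi_deriv x hs).differentiableAt.differentiableWithinAt
    · intro x hx
      rw [interior_Icc] at hx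
      have hx0 : 0 < x := lt_trans ht.1 hx.1
      have hs : 0 < Real.sin x := hsin x ⟨hx.1.le, hx.2.le⟩
      have hc : 0 < Real.cos x := Real.cos_pos_of_mem_Ioo ⟨by linarith [Real.pi_pos], hx.2⟩
      rw [(psi_deriv x (ne_of_gt hs)).deriv]
      apply div_nonpos_of_nonpos_of_nonneg _ (by positivity)
      have hsx : Real.sin x < x := Real.sin_lt hx0
      have hpy : x * Real.sin x ^ 2 * (Real.sin x ^ 2 + Real.cos x ^ 2 - 1) = 0 := by
        rw [Real.sin_sq_add_cos_sq]; ring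
      have hprod : 0 ≤ Real.sin x * Real.cos x * ((x - Real.sin x) * (x + Real.sin x)) := by
        have h1 : 0 ≤ x - Real.sin x := by linarith
        have h2 : 0 ≤ x + Real.sin x := by linarith
        positivity
      nlinarith [hpy, hprod]
  have hmem : Real.pi / 2 ∈ Icc t (Real.pi / 2) := ⟨ht.2.le, le_refl _⟩
  have hmemt : t ∈ Icc t (Real.pi / 2) := ⟨le_refl _, ht.2.le⟩
  have h := hanti hmemt hmem ht.2.le
  simp only [Real.sin_pi_div_two, Real.cos_pi_div_two, mul_zero, mul_one, zero_add,
    one_pow, div_one] at h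
  have hst2 : 0 < Real.sin t ^ 2 := by positivity
  calc Real.pi ^ 2 / 4 * Real.sin t ^ 2 = (Real.pi / 2) ^ 2 * Real.sin t ^ 2 := by ring
    _ ≤ 2 * t * Real.sin t * Real.cos t + t ^ 2 := (le_div_iff₀ hst2).mp h

lemma xi_bounds_nonneg (t : ℝ) (ht : t ∈ Ico 0 (Real.pi / 2)) :
    1 - Real.pi ^ 2 / 4 ≤ xi t ∧ xi t ≤ 0 := by
  have hc : 0 < Real.cos t :=
    Real.cos_pos_of_mem_Ioo ⟨by linarith [Real.pi_pos, ht.1], ht.2⟩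
  have hc2 : 0 < Real.cos t ^ 2 := by positivity
  have hpyth : Real.sin t ^ 2 + Real.cos t ^ 2 = 1 := Real.sin_sq_add_cos_sq t
  constructor
  · have hnum : (1 - Real.pi ^ 2 / 4) * Real.cos t ^ 2 ≤
        Real.cos t ^ 2 + 2 * t * Real.sin t * Real.cos t + t ^ 2 - Real.pi ^ 2 / 4 := by
      rcases eq_or_lt_of_le ht.1 with h0 | h0
      · rw [← h0]; norm_num
      · have := psi_ge t ⟨h0, ht.2⟩
        nlinarith
    rw [xi, le_div_iff₀ hc2]
    exact hnum
  · have hle := h_le t ⟨ht.1, ht.2.le⟩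
    have e : Real.cos t ^ 2 + 2 * t * Real.sin t * Real.cos t + t ^ 2
        = (Real.cos t + t * Real.sin t) ^ 2 + (t * Real.cos t) ^ 2
          + t ^ 2 * (1 - (Real.sin t ^ 2 + Real.cos t ^ 2)) := by ring
    rw [hpyth] at e
    norm_num at e
    rw [xi, div_nonpos_iff]
    right
    exact ⟨by linarith, hc2.le⟩

lemma xi_neg (t : ℝ) : xi (-t) = xi t := by
  rw [xi, xi, Real.cos_neg, Real.sin_neg]
  ring

theorem xi_bounds :
    (∀ t ∈ Ioo (-(Real.pi / 2)) (Real.pi / 2),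
      1 - Real.pi ^ 2 / 4 ≤ xi t ∧ xi t ≤ 0) ∧
    xi 0 = 1 - Real.pi ^ 2 / 4 := by
  constructor
  · intro t ht
    rcases le_or_gt 0 t with h0 | h0
    · exact xi_bounds_nonneg t ⟨h0, ht.2⟩
    · have := xi_bounds_nonneg (-t) ⟨by linarith, by linarith [ht.1]⟩
      rwa [xi_neg] at this
  · rw [xi]
    norm_num
end

section
/- The second derivative of ξ(t) = (cos²t + 2t·sin t·cos t + t² − π²/4)/cos²t is strictly positive on (−π/2, π/2); in particular ξ is strictly convex on this interval. -/
open Real Set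

/-- Explicit formula for the first derivative of `xi` (valid where `cos t ≠ 0`). -/
noncomputable def xig (t : ℝ) : ℝ :=
  4 * t + 2 * Real.sin t *
    (Real.cos t ^ 2 + 2 * t * Real.sin t * Real.cos t + t ^ 2 - Real.pi ^ 2 / 4) / Real.cos t ^ 3

/-- `Fq t = cos t ^ 4 * xi'' t`. -/
noncomputable def Fq (t : ℝ) : ℝ :=
  6 * Real.cos t ^ 2 + 12 * t * Real.sin t * Real.cos t +
    2 * (t ^ 2 - Real.pi ^ 2 / 4) * (2 * Real.sin t ^ 2 + 1)

/-- Auxiliary function with `Fq' t = -8 cos t * phiq t`. -/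
noncomputable def phiq (t : ℝ) : ℝ :=
  (Real.pi ^ 2 / 4 - t ^ 2) * Real.sin t - 2 * t * Real.cos t

lemma hasDerivAt_N (t : ℝ) :
    HasDerivAt (fun u => Real.cos u ^ 2 + 2 * u * Real.sin u * Real.cos u + u ^ 2
      - Real.pi ^ 2 / 4) (4 * t * Real.cos t ^ 2) t := by
  have hs := Real.hasDerivAt_sin t
  have hc := Real.hasDerivAt_cos t
  have h := (((hc.pow 2).add ((((hasDerivAt_id t).const_mul 2).mul hs).mul hc)).add
    ((hasDerivAt_id t).pow 2)).sub_const (Real.pi ^ 2 / 4)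
  refine HasDerivAt.congr_deriv h ?_
  simp only [id_eq, Nat.cast_ofNat, pow_one, Pi.mul_apply, Pi.pow_apply, Pi.add_apply, Pi.div_apply]
  linear_combination (-2 * t) * Real.sin_sq_add_cos_sq t

lemma hasDerivAt_xi {t : ℝ} (hc : Real.cos t ≠ 0) : HasDerivAt xi (xig t) t := by
  have hcos := Real.hasDerivAt_cos t
  have hN := hasDerivAt_N t
  have hd := hN.div (hcos.pow 2) (pow_ne_zero 2 hc)
  refine HasDerivAt.congr_deriv hd ?_
  simp only [Nat.cast_ofNat, pow_one, Pi.pow_apply]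
  rw [xig]
  field_simp
  ring

lemma hasDerivAt_xig {t : ℝ} (hc : Real.cos t ≠ 0) :
    HasDerivAt xig (Fq t / Real.cos t ^ 4) t := by
  have hs := Real.hasDerivAt_sin t
  have hcos := Real.hasDerivAt_cos t
  have hN := hasDerivAt_N t
  have h1 := ((hs.const_mul 2).mul hN).div (hcos.pow 3) (pow_ne_zero 3 hc)
  have h2 := (((hasDerivAt_id t).const_mul 4)).add h1
  refine HasDerivAt.congr_deriv h2 ?_
  simp only [id_eq, Nat.cast_ofNat, pow_one, Pi.mul_apply, Pi.pow_apply, Pi.add_apply, Pi.div_apply]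
  rw [Fq]
  field_simp
  linear_combination (8*t^2*Real.cos t^2 - 2*Real.pi^2*Real.cos t^2
    + 48*t*Real.sin t*Real.cos t^3 + 24*Real.cos t^4) * Real.sin_sq_add_cos_sq t

lemma hasDerivAt_phiq (t : ℝ) :
    HasDerivAt phiq ((Real.pi ^ 2 / 4 - 2 - t ^ 2) * Real.cos t) t := by
  have hs := Real.hasDerivAt_sin t
  have hcos := Real.hasDerivAt_cos t
  have h := (((((hasDerivAt_id t).pow 2).const_mul (-1)).add_const (Real.pi ^ 2 / 4)).mul hs).sub
    ((((hasDerivAt_id t)).const_mul 2).mul hcos)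
  have heq : phiq = fun u => (-1 * u ^ 2 + Real.pi ^ 2 / 4) * Real.sin u - 2 * u * Real.cos u := by
    funext u; rw [phiq]; ring
  rw [heq]
  refine HasDerivAt.congr_deriv h ?_
  simp only [id_eq, Nat.cast_ofNat, pow_one, Pi.mul_apply, Pi.pow_apply, Pi.add_apply, Pi.div_apply]
  ring

lemma hasDerivAt_Fq (t : ℝ) :
    HasDerivAt Fq (-8 * Real.cos t * phiq t) t := by
  have hs := Real.hasDerivAt_sin t
  have hcos := Real.hasDerivAt_cos t
  have h := (((hcos.pow 2).const_mul 6).add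
      ((((hasDerivAt_id t).const_mul 12).mul hs).mul hcos)).add
      (((((hasDerivAt_id t).pow 2).sub_const (Real.pi ^ 2 / 4)).const_mul 2).mul
        (((hs.pow 2).const_mul 2).add_const 1))
  have heq : Fq = fun u => (6 * Real.cos u ^ 2 + 12 * u * Real.sin u * Real.cos u) +
      2 * (u ^ 2 - Real.pi ^ 2 / 4) * (2 * Real.sin u ^ 2 + 1) := by
    funext u; rw [Fq]
  rw [heq]
  refine HasDerivAt.congr_deriv h ?_
  simp only [id_eq, Nat.cast_ofNat, pow_one, Pi.mul_apply, Pi.pow_apply, Pi.add_apply, Pi.div_apply]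
  rw [phiq]
  linear_combination (-4 * t) * Real.sin_sq_add_cos_sq t

lemma phiq_pos {t : ℝ} (ht : t ∈ Ioo 0 (Real.pi / 2)) : 0 < phiq t := by
  obtain ⟨ht0, ht2⟩ := ht
  set a := Real.sqrt (Real.pi ^ 2 / 4 - 2) with ha
  have hpi := Real.pi_gt_three
  have hpos : (0:ℝ) < Real.pi ^ 2 / 4 - 2 := by nlinarith
  have ha2 : a ^ 2 = Real.pi ^ 2 / 4 - 2 := Real.sq_sqrt hpos.le
  have ha0 : 0 < a := Real.sqrt_pos.mpr hpos
  have haπ : a < Real.pi / 2 := by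
    rw [ha]
    rw [show Real.pi / 2 = Real.sqrt ((Real.pi / 2) ^ 2) from
      (Real.sqrt_sq (by positivity)).symm]
    apply Real.sqrt_lt_sqrt hpos.le
    nlinarith
  have hderiv : ∀ x : ℝ, deriv phiq x = (Real.pi ^ 2 / 4 - 2 - x ^ 2) * Real.cos x :=
    fun x => (hasDerivAt_phiq x).deriv
  have hcont : Continuous phiq := by
    have : phiq = fun u => (Real.pi ^ 2 / 4 - u ^ 2) * Real.sin u - 2 * u * Real.cos u := rfl
    rw [this]; fun_prop
  have hmono : StrictMonoOn phiq (Icc 0 a) := by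
    apply strictMonoOn_of_deriv_pos (convex_Icc _ _) hcont.continuousOn
    intro x hx
    rw [interior_Icc] at hx
    rw [hderiv]
    apply mul_pos
    · nlinarith [hx.1, hx.2, ha2, sq_nonneg x]
    · apply Real.cos_pos_of_mem_Ioo
      constructor
      · linarith [Real.pi_pos, hx.1]
      · linarith [hx.2, haπ]
  have hanti : StrictAntiOn phiq (Icc a (Real.pi / 2)) := by
    apply strictAntiOn_of_deriv_neg (convex_Icc _ _) hcont.continuousOn
    intro x hx
    rw [interior_Icc] at hx
    rw [hderiv]
    have hx0 : 0 < x := lt_trans ha0 hx.1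
    have hcx : 0 < Real.cos x := Real.cos_pos_of_mem_Ioo
      ⟨by linarith [Real.pi_pos], hx.2⟩
    have : x ^ 2 > a ^ 2 := by nlinarith [hx.1, ha0]
    nlinarith
  have hphi0 : phiq 0 = 0 := by simp [phiq]
  have hphiπ : phiq (Real.pi / 2) = 0 := by
    rw [phiq, Real.sin_pi_div_two, Real.cos_pi_div_two]
    ring
  rcases le_or_gt t a with h | h
  · have := hmono (left_mem_Icc.mpr (le_trans ht0.le h)) ⟨ht0.le, h⟩ ht0
    rwa [hphi0] at this
  · have := hanti ⟨h.le, ht2.le⟩ (right_mem_Icc.mpr (by linarith [haπ])) ht2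
    rwa [hphiπ] at this

lemma Fq_even (t : ℝ) : Fq (-t) = Fq t := by
  rw [Fq, Fq]
  simp only [Real.sin_neg, Real.cos_neg]
  ring

lemma Fq_pos_aux {t : ℝ} (ht0 : 0 ≤ t) (ht2 : t < Real.pi / 2) : 0 < Fq t := by
  have hcont : Continuous Fq := by
    have : Fq = fun u => 6 * Real.cos u ^ 2 + 12 * u * Real.sin u * Real.cos u +
      2 * (u ^ 2 - Real.pi ^ 2 / 4) * (2 * Real.sin u ^ 2 + 1) := rfl
    rw [this]; fun_prop
  have hanti : StrictAntiOn Fq (Icc 0 (Real.pi / 2)) := by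
    apply strictAntiOn_of_deriv_neg (convex_Icc _ _) hcont.continuousOn
    intro x hx
    rw [interior_Icc] at hx
    rw [(hasDerivAt_Fq x).deriv]
    have hcx : 0 < Real.cos x := Real.cos_pos_of_mem_Ioo
      ⟨by linarith [Real.pi_pos, hx.1], hx.2⟩
    have hφ : 0 < phiq x := phiq_pos ⟨hx.1, hx.2⟩
    nlinarith
  have hFπ : Fq (Real.pi / 2) = 0 := by
    rw [Fq, Real.sin_pi_div_two, Real.cos_pi_div_two]
    ring
  have := hanti ⟨ht0, ht2.le⟩ (right_mem_Icc.mpr (by positivity)) ht2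
  rwa [hFπ] at this

lemma Fq_pos {t : ℝ} (ht : t ∈ Ioo (-(Real.pi / 2)) (Real.pi / 2)) : 0 < Fq t := by
  rcases le_or_gt 0 t with h | h
  · exact Fq_pos_aux h ht.2
  · have := Fq_pos_aux (t := -t) (by linarith) (by linarith [ht.1])
    rwa [Fq_even] at this

theorem xi_second_deriv_pos :
    (∀ t ∈ Ioo (-(Real.pi / 2)) (Real.pi / 2), 0 < deriv (deriv xi) t) ∧
    StrictConvexOn ℝ (Ioo (-(Real.pi / 2)) (Real.pi / 2)) xi := by
  have hcospos : ∀ x ∈ Ioo (-(Real.pi / 2)) (Real.pi / 2), 0 < Real.cos x := by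
    intro x hx
    exact Real.cos_pos_of_mem_Ioo hx
  have hmain : ∀ t ∈ Ioo (-(Real.pi / 2)) (Real.pi / 2), 0 < deriv (deriv xi) t := by
    intro t ht
    have hev : deriv xi =ᶠ[nhds t] xig := by
      filter_upwards [isOpen_Ioo.mem_nhds ht] with x hx
      exact (hasDerivAt_xi (ne_of_gt (hcospos x hx))).deriv
    rw [hev.deriv_eq, (hasDerivAt_xig (ne_of_gt (hcospos t ht))).deriv]
    exact div_pos (Fq_pos ht) (pow_pos (hcospos t ht) 4)
  refine ⟨hmain, ?_⟩
  have hconv : StrictConvexOn ℝ (Ioo (-(Real.pi / 2)) (Real.pi / 2)) xi := by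
    apply strictConvexOn_of_deriv2_pos (convex_Ioo _ _)
    · apply ContinuousOn.div
      · fun_prop
      · fun_prop
      · intro x hx
        exact pow_ne_zero 2 (ne_of_gt (hcospos x hx))
    · intro x hx
      rw [interior_Ioo] at hx
      exact hmain x hx
  exact hconv
end

section
/- For ξ(t) = (cos²t + 2t·sin t·cos t + t² − π²/4)/cos²t, one has ξ'(t) < 0 for t in (−π/2, 0) and ξ'(t) > 0 for t in (0, π/2), i.e., t·ξ'(t) > 0 for nonzero t in (−π/2, π/2). -/
open Real Set

lemma Raux (s p : ℝ) (h0 : 0 < s) (h1 : s ≤ 0.871) (hp : 3.141592 < p) (hp' : p < 3.141593) :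
    0 < p/3 - s - 5*p*s/96 - 5*p*s^2/96 + 43*s^3/144 + 5*s^4/72 - 263*s^5/9216
      - 65*s^6/4608 + 5*s^7/55296 + 25*s^8/27648 + 125*s^9/884736 := by
  nlinarith [mul_nonneg (sub_nonneg.mpr h1) h0.le, mul_nonneg (mul_nonneg (sub_nonneg.mpr h1) h0.le) h0.le,
    mul_nonneg (mul_nonneg (mul_nonneg (sub_nonneg.mpr h1) h0.le) h0.le) h0.le,
    mul_nonneg (mul_nonneg (mul_nonneg (mul_nonneg (sub_nonneg.mpr h1) h0.le) h0.le) h0.le) h0.le,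
    pow_pos h0 3, pow_pos h0 5, sq_nonneg (s - 0.871), mul_pos h0 h0]

set_option maxHeartbeats 1000000 in
lemma largeCase (s : ℝ) (h0 : 0 < s) (h1 : s ≤ 0.871) :
    0 < 2*(Real.pi/2 - s)*Real.sin s + Real.cos s*(Real.sin s^2 + (Real.pi/2 - s)^2 - Real.pi^2/4) := by
  have hpi := Real.pi_gt_d6
  have hpi' := Real.pi_lt_d6
  have habs : |s| ≤ 1 := by rw [abs_of_pos h0]; linarith
  have hsb := abs_le.mp (Real.sin_bound habs)
  have hcb := abs_le.mp (Real.cos_bound habs)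
  rw [abs_of_pos h0] at hsb hcb
  have hsu : Real.sin s < s := Real.sin_lt h0
  have hsl : s - s^3/6 - s^4*(5/96) ≤ Real.sin s := by nlinarith [hsb.2]
  have hcu : Real.cos s ≤ 1 - s^2/2 + s^4*(5/96) := by nlinarith [hcb.1]
  have hc0 : 0 < Real.cos s := by nlinarith [hcb.2]
  have hL0 : 0 ≤ s - s^3/6 - s^4*(5/96) := by nlinarith
  have hs0 : 0 < Real.sin s := by nlinarith
  have hU0 : (0:ℝ) < 1 - s^2/2 + s^4*(5/96) := by nlinarith
  have hbr : Real.sin s^2 + (Real.pi/2 - s)^2 - Real.pi^2/4 ≤ 0 := by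
    nlinarith [mul_lt_mul_of_pos_left hsu hs0, mul_pos h0 h0]
  have hbrl : (s - s^3/6 - s^4*(5/96))^2 + (Real.pi/2 - s)^2 - Real.pi^2/4 ≤
      Real.sin s^2 + (Real.pi/2 - s)^2 - Real.pi^2/4 := by
    nlinarith [mul_le_mul hsl hsl hL0 hs0.le]
  have h2a : (1 - s^2/2 + s^4*(5/96)) * ((s - s^3/6 - s^4*(5/96))^2 + (Real.pi/2 - s)^2 - Real.pi^2/4)
      ≤ (1 - s^2/2 + s^4*(5/96)) * (Real.sin s^2 + (Real.pi/2 - s)^2 - Real.pi^2/4) :=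
    mul_le_mul_of_nonneg_left hbrl hU0.le
  have h2b : (1 - s^2/2 + s^4*(5/96)) * (Real.sin s^2 + (Real.pi/2 - s)^2 - Real.pi^2/4)
      ≤ Real.cos s * (Real.sin s^2 + (Real.pi/2 - s)^2 - Real.pi^2/4) :=
    mul_le_mul_of_nonpos_right hcu hbr
  have hps : (0:ℝ) ≤ Real.pi - 2*s := by linarith
  have h3a : (Real.pi - 2*s) * (s - s^3/6 - s^4*(5/96)) ≤ (Real.pi - 2*s) * Real.sin s :=
    mul_le_mul_of_nonneg_left hsl hps
  have h3b : (Real.pi - 2*s) * Real.sin s = 2*(Real.pi/2 - s)*Real.sin s := by ring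
  have hRpos := Raux s Real.pi h0 h1 hpi hpi'
  have hid : (Real.pi - 2*s) * (s - s^3/6 - s^4*(5/96))
        + (1 - s^2/2 + s^4*(5/96)) * ((s - s^3/6 - s^4*(5/96))^2 + (Real.pi/2 - s)^2 - Real.pi^2/4)
      = s^3 * (Real.pi/3 - s - 5*Real.pi*s/96 - 5*Real.pi*s^2/96 + 43*s^3/144 + 5*s^4/72
          - 263*s^5/9216 - 65*s^6/4608 + 5*s^7/55296 + 25*s^8/27648 + 125*s^9/884736) := by
    ring
  have hkey : 0 < (Real.pi - 2*s) * (s - s^3/6 - s^4*(5/96))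
      + (1 - s^2/2 + s^4*(5/96)) * ((s - s^3/6 - s^4*(5/96))^2 + (Real.pi/2 - s)^2 - Real.pi^2/4) := by
    rw [hid]; exact mul_pos (pow_pos h0 3) hRpos
  linarith

lemma smallCase (t : ℝ) (h0 : 0 < t) (h2 : t ≤ 0.7) :
    0 < 2*t*Real.cos t + Real.sin t*(Real.cos t^2 + t^2 - Real.pi^2/4) := by
  have hpi := Real.pi_gt_d6
  have hpi' := Real.pi_lt_d6
  have hc1 := Real.cos_le_one t
  have hc : 1 - t^2/2 ≤ Real.cos t := Real.one_sub_sq_div_two_le_cos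
  have hs := Real.sin_lt h0
  have hc0 : 0 < Real.cos t := by nlinarith
  have hbr : Real.cos t^2 + t^2 - Real.pi^2/4 < 0 := by
    nlinarith [sq_nonneg (Real.pi - 3.141592), mul_le_one₀ hc1 hc0.le hc1]
  have h1 : t * (Real.cos t^2 + t^2 - Real.pi^2/4) ≤ Real.sin t * (Real.cos t^2 + t^2 - Real.pi^2/4) :=
    mul_le_mul_of_nonpos_right hs.le hbr.le
  have h05 : (0:ℝ) ≤ 1 - t^2/2 := by nlinarith
  have hcc : (1-t^2/2)^2 ≤ Real.cos t^2 := by nlinarith [mul_le_mul hc hc h05 hc0.le]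
  have hpoly : 0 < 2*(1-t^2/2) + ((1-t^2/2)^2 + t^2 - Real.pi^2/4) := by
    nlinarith [sq_nonneg (t^2), sq_nonneg (Real.pi - 3.141593)]
  nlinarith [mul_pos h0 hpoly, h1, mul_le_mul_of_nonneg_left hc h0.le, mul_le_mul_of_nonneg_left hcc h0.le]

lemma keyPos (t : ℝ) (h0 : 0 < t) (h2 : t < Real.pi/2) :
    0 < 2*t*Real.cos t + Real.sin t*(Real.cos t^2 + t^2 - Real.pi^2/4) := by
  rcases le_or_gt t 0.7 with h | h
  · exact smallCase t h0 h
  · have hpi' := Real.pi_lt_d6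
    have h0' : 0 < Real.pi/2 - t := by linarith
    have h1' : Real.pi/2 - t ≤ 0.871 := by norm_num; linarith
    have := largeCase (Real.pi/2 - t) h0' h1'
    rw [show Real.pi/2 - (Real.pi/2 - t) = t from by ring,
      Real.sin_pi_div_two_sub, Real.cos_pi_div_two_sub] at this
    linarith

lemma keyTN (t : ℝ) (h1 : -(Real.pi/2) < t) (h2 : t < Real.pi/2) (hne : t ≠ 0) :
    0 < t * (2*t*Real.cos t + Real.sin t*(Real.cos t^2 + t^2 - Real.pi^2/4)) := by
  rcases hne.lt_or_gt with hneg | hpos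
  · have := keyPos (-t) (by linarith) (by linarith)
    rw [Real.cos_neg, Real.sin_neg] at this
    nlinarith
  · exact mul_pos hpos (keyPos t hpos h2)

theorem xi_deriv_sign :
    ∀ t ∈ Ioo (-(Real.pi / 2)) (Real.pi / 2), t ≠ 0 → 0 < t * deriv xi t := by
  intro t ht hne
  obtain ⟨ht1, ht2⟩ := ht
  have hc0 : 0 < Real.cos t := Real.cos_pos_of_mem_Ioo ⟨ht1, ht2⟩
  have hc : Real.cos t ≠ 0 := ne_of_gt hc0
  -- derivative of xi
  have hcos := Real.hasDerivAt_cos t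
  have hsin := Real.hasDerivAt_sin t
  have hc2 : HasDerivAt (fun t => Real.cos t ^ 2) (2 * Real.cos t ^ 1 * (-Real.sin t)) t := hcos.pow 2
  have hmid : HasDerivAt (fun t => 2 * t * Real.sin t * Real.cos t)
      ((2 * Real.sin t + 2 * t * Real.cos t) * Real.cos t + 2 * t * Real.sin t * (-Real.sin t)) t := by
    have h1 : HasDerivAt (fun t : ℝ => 2 * t * Real.sin t) (2 * Real.sin t + 2 * t * Real.cos t) t := by
      have := ((hasDerivAt_id t).const_mul 2).mul hsin
      simp only [id, mul_one] at this
      exact this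
    exact h1.mul hcos
  have hsq : HasDerivAt (fun t : ℝ => t ^ 2) (2 * t) t := by
    simpa using (hasDerivAt_pow 2 t)
  have hnum : HasDerivAt (fun t => Real.cos t ^ 2 + 2 * t * Real.sin t * Real.cos t + t ^ 2 - Real.pi ^ 2 / 4)
      ((2 * Real.cos t ^ 1 * (-Real.sin t)) + ((2 * Real.sin t + 2 * t * Real.cos t) * Real.cos t + 2 * t * Real.sin t * (-Real.sin t)) + 2 * t) t := by
    simpa using ((hc2.add hmid).add hsq).sub_const (Real.pi ^ 2 / 4)
  have hxi : HasDerivAt xi ((((2 * Real.cos t ^ 1 * (-Real.sin t)) + ((2 * Real.sin t + 2 * t * Real.cos t) * Real.cos t + 2 * t * Real.sin t * (-Real.sin t)) + 2 * t) * Real.cos t ^ 2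
      - (Real.cos t ^ 2 + 2 * t * Real.sin t * Real.cos t + t ^ 2 - Real.pi ^ 2 / 4) * (2 * Real.cos t ^ 1 * (-Real.sin t))) / (Real.cos t ^ 2) ^ 2) t :=
    hnum.div hc2 (pow_ne_zero 2 hc)
  have hd : deriv xi t = ((((2 * Real.cos t ^ 1 * (-Real.sin t)) + ((2 * Real.sin t + 2 * t * Real.cos t) * Real.cos t + 2 * t * Real.sin t * (-Real.sin t)) + 2 * t) * Real.cos t ^ 2
      - (Real.cos t ^ 2 + 2 * t * Real.sin t * Real.cos t + t ^ 2 - Real.pi ^ 2 / 4) * (2 * Real.cos t ^ 1 * (-Real.sin t))) / (Real.cos t ^ 2) ^ 2) := hxi.deriv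
  have hval : deriv xi t = 2 * (2*t*Real.cos t + Real.sin t*(Real.cos t^2 + t^2 - Real.pi^2/4)) / Real.cos t ^ 3 := by
    rw [hd]
    have hsc := Real.sin_sq_add_cos_sq t
    field_simp
    linear_combination (4 * t * Real.cos t) * hsc
  rw [hval]
  have hN := keyTN t ht1 ht2 hne
  have hc3 : 0 < Real.cos t ^ 3 := pow_pos hc0 3
  rw [show t * (2 * (2*t*Real.cos t + Real.sin t*(Real.cos t^2 + t^2 - Real.pi^2/4)) / Real.cos t ^ 3)
    = 2 * (t * (2*t*Real.cos t + Real.sin t*(Real.cos t^2 + t^2 - Real.pi^2/4))) / Real.cos t ^ 3 from by ring]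
  positivity
end

section
/- The function q(t) = ξ'(t), where ξ(t) = (cos²t + 2t·sin t·cos t + t² − π²/4)/cos²t, satisfies the ODE (1/2)q''(t)·cos t − 2q'(t)·sin t − 2q(t)·cos t = −4·sin t on (−π/2, π/2). -/
open Real Set

noncomputable def f1 (t : ℝ) : ℝ :=
  (2 * Real.sin t * Real.cos t ^ 2 + 4 * t * Real.cos t
    + 2 * (t ^ 2 - Real.pi ^ 2 / 4) * Real.sin t) / Real.cos t ^ 3

noncomputable def f2 (t : ℝ) : ℝ :=
  (6 * Real.cos t ^ 2 + 12 * t * Real.sin t * Real.cos t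
    + 2 * (t ^ 2 - Real.pi ^ 2 / 4) * (Real.cos t ^ 2 + 3 * Real.sin t ^ 2)) / Real.cos t ^ 4

noncomputable def f3 (t : ℝ) : ℝ :=
  (24 * Real.sin t * Real.cos t ^ 2
    + 16 * t * Real.cos t * (Real.cos t ^ 2 + 3 * Real.sin t ^ 2)
    + 8 * (t ^ 2 - Real.pi ^ 2 / 4) * Real.sin t * (2 + Real.sin t ^ 2)) / Real.cos t ^ 5

lemma hd_xi {t : ℝ} (hc : Real.cos t ≠ 0) : HasDerivAt xi (f1 t) t := by
  have hs := Real.hasDerivAt_sin t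
  have hcc := Real.hasDerivAt_cos t
  have hN := (((hcc.pow 2).add
      (((hasDerivAt_id' (x := t)).const_mul 2).mul hs |>.mul hcc)).add
      (hasDerivAt_pow 2 t)).sub_const (Real.pi ^ 2 / 4)
  have hD := hcc.pow 2
  have h2 : Real.cos t ^ 2 ≠ 0 := pow_ne_zero _ hc
  have H := hN.div hD h2
  have hx : xi = fun x =>
      (Real.cos x ^ 2 + 2 * x * Real.sin x * Real.cos x + x ^ 2 - Real.pi ^ 2 / 4)
        / Real.cos x ^ 2 := rfl
  rw [hx]
  convert H using 1
  case e'_4 => rfl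
  case e'_5 => rfl
  case e'_8 => rfl
  have hp := Real.sin_sq_add_cos_sq t
  unfold f1
  simp only [Pi.add_apply, Pi.mul_apply, Pi.pow_apply]
  field_simp
  linear_combination (-8 * t * Real.cos t ^ 2) * hp

lemma hd_f1 {t : ℝ} (hc : Real.cos t ≠ 0) : HasDerivAt f1 (f2 t) t := by
  have hs := Real.hasDerivAt_sin t
  have hcc := Real.hasDerivAt_cos t
  have hN := (((hs.const_mul 2).mul (hcc.pow 2)).add
      (((hasDerivAt_id' (x := t)).const_mul 4).mul hcc)).add
      ((((hasDerivAt_pow 2 t).sub_const (Real.pi ^ 2 / 4)).const_mul 2).mul hs)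
  have hD := hcc.pow 3
  have h3 : Real.cos t ^ 3 ≠ 0 := pow_ne_zero _ hc
  have H := hN.div hD h3
  have hx : f1 = fun x =>
      (2 * Real.sin x * Real.cos x ^ 2 + 4 * x * Real.cos x
        + 2 * (x ^ 2 - Real.pi ^ 2 / 4) * Real.sin x) / Real.cos x ^ 3 := rfl
  rw [hx]
  convert H using 1
  case e'_4 => rfl
  case e'_5 => rfl
  case e'_8 => rfl
  have hp := Real.sin_sq_add_cos_sq t
  unfold f2
  simp only [Pi.add_apply, Pi.mul_apply, Pi.pow_apply]
  field_simp
  linear_combination (-8 * Real.cos t ^ 4) * hp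

lemma hd_f2 {t : ℝ} (hc : Real.cos t ≠ 0) : HasDerivAt f2 (f3 t) t := by
  have hs := Real.hasDerivAt_sin t
  have hcc := Real.hasDerivAt_cos t
  have hN := (((hcc.pow 2).const_mul 6).add
      ((((hasDerivAt_id' (x := t)).const_mul 12).mul hs).mul hcc)).add
      ((((hasDerivAt_pow 2 t).sub_const (Real.pi ^ 2 / 4)).const_mul 2).mul
        ((hcc.pow 2).add ((hs.pow 2).const_mul 3)))
  have hD := hcc.pow 4
  have h4 : Real.cos t ^ 4 ≠ 0 := pow_ne_zero _ hc
  have H := hN.div hD h4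
  have hx : f2 = fun x =>
      (6 * Real.cos x ^ 2 + 12 * x * Real.sin x * Real.cos x
        + 2 * (x ^ 2 - Real.pi ^ 2 / 4) * (Real.cos x ^ 2 + 3 * Real.sin x ^ 2))
        / Real.cos x ^ 4 := rfl
  rw [hx]
  convert H using 1
  case e'_4 => rfl
  case e'_5 => rfl
  case e'_8 => rfl
  have hp := Real.sin_sq_add_cos_sq t
  unfold f3
  simp only [Pi.add_apply, Pi.mul_apply, Pi.pow_apply]
  field_simp
  linear_combination (-16 * Real.sin t * Real.cos t ^ 3 * (4 * t ^ 2 - Real.pi ^ 2)) * hp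

lemma hopen : IsOpen {t : ℝ | Real.cos t ≠ 0} :=
  isOpen_ne.preimage Real.continuous_cos

lemma deriv1 {t : ℝ} (hc : Real.cos t ≠ 0) : deriv xi t = f1 t := (hd_xi hc).deriv

lemma deriv2 {t : ℝ} (hc : Real.cos t ≠ 0) : deriv (deriv xi) t = f2 t := by
  have hev : deriv xi =ᶠ[nhds t] f1 := by
    filter_upwards [hopen.mem_nhds hc] with s hs using deriv1 hs
  rw [hev.deriv_eq]
  exact (hd_f1 hc).deriv

lemma deriv3 {t : ℝ} (hc : Real.cos t ≠ 0) : deriv (deriv (deriv xi)) t = f3 t := by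
  have hev : deriv (deriv xi) =ᶠ[nhds t] f2 := by
    filter_upwards [hopen.mem_nhds hc] with s hs using deriv2 hs
  rw [hev.deriv_eq]
  exact (hd_f2 hc).deriv

theorem q_ode :
    ∀ t ∈ Ioo (-(Real.pi / 2)) (Real.pi / 2),
      (1 / 2) * deriv (deriv (deriv xi)) t * Real.cos t
        - 2 * deriv (deriv xi) t * Real.sin t
        - 2 * deriv xi t * Real.cos t = -4 * Real.sin t := by
  intro t ht
  have hcpos : 0 < Real.cos t := Real.cos_pos_of_mem_Ioo ht
  have hc : Real.cos t ≠ 0 := ne_of_gt hcpos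
  rw [deriv1 hc, deriv2 hc, deriv3 hc]
  have hp := Real.sin_sq_add_cos_sq t
  unfold f1 f2 f3
  field_simp
  linear_combination (-16 * Real.sin t * (4 * t ^ 2 - Real.pi ^ 2)) * hp
end
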